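/- For any natural number u (the number of urelements), the function f_u defined by f_u(x) = x if x is an urelement labeled by a number less than u, and f_u(x) = u + Σ_{a ∈ x} 2^{f_u(a)} if x is a set, is a bijection from the universe of hereditarily finite sets with urelements {0,...,u-1} to ℕ. -/

import Mathlib

inductive PHF (u : ℕ) : Type
  | atom : Fin u → PHF u
  | set : List (PHF u) → PHF u

mutual
  inductive PHF.Eqv {u : ℕ} : PHF u → PHF u → Prop
    | atom (i : Fin u) : PHF.Eqv (.atom i) (.atom i)
    | set {l m : List (PHF u)} :
        PHF.Sub l m → PHF.Sub m l → PHF.Eqv (.set l) (.set m)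

  inductive PHF.Sub {u : ℕ} : List (PHF u) → List (PHF u) → Prop
    | nil (m : List (PHF u)) : PHF.Sub [] m
    | cons {a b : PHF u} {l m : List (PHF u)} :
        PHF.Eqv a b → b ∈ m → PHF.Sub l m → PHF.Sub (a :: l) m
end

mutual
  theorem PHF.eqvRfl {u : ℕ} : ∀ x : PHF u, PHF.Eqv x x
    | .atom i => .atom i
    | .set l => .set (PHF.subOfSubset l l (fun _ h => h)) (PHF.subOfSubset l l (fun _ h => h))
  termination_by x => sizeOf x

  theorem PHF.subOfSubset {u : ℕ} : ∀ l m : List (PHF u), (∀ a ∈ l, a ∈ m) → PHF.Sub l m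
    | [], m, _ => .nil m
    | a :: l, m, h =>
        .cons (PHF.eqvRfl a) (h a List.mem_cons_self)
          (PHF.subOfSubset l m (fun b hb => h b (List.mem_cons_of_mem a hb)))
  termination_by l m _ => sizeOf l
end

theorem PHF.eqvSymm {u : ℕ} {x y : PHF u} (h : PHF.Eqv x y) : PHF.Eqv y x := by
  cases h with
  | atom i => exact .atom i
  | set h1 h2 => exact .set h2 h1

theorem PHF.memSub {u : ℕ} {b : PHF u} :
    ∀ {m n : List (PHF u)}, b ∈ m → PHF.Sub m n → ∃ c ∈ n, PHF.Eqv b c := by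
  intro m
  induction m with
  | nil => intro n hb _; cases hb
  | cons a l ih =>
    intro n hb h
    cases h with
    | cons heq hc hsub =>
      rcases List.mem_cons.mp hb with rfl | hb
      · exact ⟨_, hc, heq⟩
      · exact ih hb hsub

mutual
  theorem PHF.eqvTrans {u : ℕ} : ∀ {x y z : PHF u}, PHF.Eqv x y → PHF.Eqv y z → PHF.Eqv x z
    | _, _, _, .atom _, h2 => h2
    | _, _, _, .set s1 s2, .set t1 t2 => .set (PHF.subTrans s1 t1) (PHF.subTrans t2 s2)

  theorem PHF.subTrans {u : ℕ} :
      ∀ {l m n : List (PHF u)}, PHF.Sub l m → PHF.Sub m n → PHF.Sub l n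
    | _, _, n, .nil _, _ => .nil n
    | _, _, _, .cons hab hb hsub, h2 =>
        let ⟨_, hc, hbc⟩ := PHF.memSub hb h2
        .cons (PHF.eqvTrans hab hbc) hc (PHF.subTrans hsub h2)
end

instance PHF.setoid (u : ℕ) : Setoid (PHF u) :=
  ⟨PHF.Eqv, PHF.eqvRfl, PHF.eqvSymm, PHF.eqvTrans⟩

/-- The universe of hereditarily finite sets with urelements `{0,...,u-1}`:
pre-objects up to extensional equivalence. -/
def HFU (u : ℕ) : Type := Quotient (PHF.setoid u)

/-- The urelement labeled `i`. -/
def HFU.atom {u : ℕ} (i : Fin u) : HFU u := Quotient.mk (PHF.setoid u) (PHF.atom i)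

/-- Membership on pre-objects: atoms have no members; a member of a set is
anything equivalent to one of its listed elements. -/
def PHF.mem {u : ℕ} (a : PHF u) : PHF u → Prop
  | .atom _ => False
  | .set l => ∃ b ∈ l, PHF.Eqv a b

/-- Membership on the quotient. -/
def HFU.Mem {u : ℕ} (a x : HFU u) : Prop :=
  ∃ a' x' : PHF u, Quotient.mk (PHF.setoid u) a' = a ∧
    Quotient.mk (PHF.setoid u) x' = x ∧ PHF.mem a' x'

/-- `x` is a set (i.e. not an urelement). -/
def HFU.IsSet {u : ℕ} (x : HFU u) : Prop :=
  ∃ l : List (PHF u), Quotient.mk (PHF.setoid u) (PHF.set l) = x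

def PHF.enc {u : ℕ} : PHF u → ℕ
  | .atom i => i
  | .set l => u + (l.attach.map fun a => PHF.enc a.1).toFinset.sum (2 ^ ·)
termination_by x => sizeOf x
decreasing_by
  have := List.sizeOf_lt_of_mem a.2
  simp_wf
  omega

theorem PHF.enc_set {u : ℕ} (l : List (PHF u)) :
    PHF.enc (.set l) = u + (l.map PHF.enc).toFinset.sum (2 ^ ·) := by
  rw [PHF.enc]
  congr 2
  simp

theorem finset_two_pow_inj {s t : Finset ℕ}
    (h : s.sum (2 ^ ·) = t.sum (2 ^ ·)) : s = t := by
  have hs : s.sum (2 ^ ·) = ((s.sort (· ≤ ·)).map (2 ^ ·)).sum := by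
    rw [← List.sum_toFinset _ (s.sort_nodup _), Finset.sort_toFinset]
  have ht : t.sum (2 ^ ·) = ((t.sort (· ≤ ·)).map (2 ^ ·)).sum := by
    rw [← List.sum_toFinset _ (t.sort_nodup _), Finset.sort_toFinset]
  have := congrArg Nat.bitIndices (hs ▸ ht ▸ h)
  rw [Nat.bitIndices_twoPowsum (s.sortedLT_sort),
    Nat.bitIndices_twoPowsum (t.sortedLT_sort)] at this
  have := congrArg List.toFinset this
  rwa [Finset.sort_toFinset, Finset.sort_toFinset] at this

theorem PHF.subOfForall {u : ℕ} : ∀ {l m : List (PHF u)},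
    (∀ b ∈ l, ∃ c ∈ m, PHF.Eqv b c) → PHF.Sub l m
  | [], m, _ => .nil m
  | a :: l, m, h => by
    obtain ⟨c, hc, hac⟩ := h a List.mem_cons_self
    exact .cons hac hc (PHF.subOfForall fun b hb => h b (List.mem_cons_of_mem a hb))

theorem PHF.encEqv {u : ℕ} : ∀ (x y : PHF u), PHF.Eqv x y → PHF.enc x = PHF.enc y
  | .atom _, .atom _, .atom _ => rfl
  | .set l, .set m, .set h1 h2 => by
    rw [PHF.enc_set, PHF.enc_set]
    have e : (l.map PHF.enc).toFinset = (m.map PHF.enc).toFinset := by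
      apply Finset.Subset.antisymm
      · intro n hn
        rw [List.mem_toFinset, List.mem_map] at hn ⊢
        obtain ⟨b, hb, rfl⟩ := hn
        obtain ⟨c, hc, hbc⟩ := PHF.memSub hb h1
        exact ⟨c, hc, (PHF.encEqv b c hbc).symm⟩
      · intro n hn
        rw [List.mem_toFinset, List.mem_map] at hn ⊢
        obtain ⟨b, hb, rfl⟩ := hn
        obtain ⟨c, hc, hbc⟩ := PHF.memSub hb h2
        exact ⟨c, hc, PHF.encEqv c b (PHF.eqvSymm hbc)⟩
    rw [e]
termination_by x _ _ => sizeOf x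
decreasing_by
  · have := List.sizeOf_lt_of_mem hb; simp_wf; omega
  · have := List.sizeOf_lt_of_mem hc; simp_wf; omega

theorem PHF.enc_atom_lt {u : ℕ} (i : Fin u) : PHF.enc (.atom i) < u := by
  rw [PHF.enc]; exact i.2

theorem PHF.le_enc_set {u : ℕ} (l : List (PHF u)) : u ≤ PHF.enc (.set l) := by
  rw [PHF.enc_set]; omega

theorem PHF.encInj {u : ℕ} : ∀ (x y : PHF u), PHF.enc x = PHF.enc y → PHF.Eqv x y
  | .atom i, .atom j, h => by
    have : (i : ℕ) = (j : ℕ) := by rwa [PHF.enc, PHF.enc] at h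
    rw [Fin.ext this]
    exact .atom j
  | .atom i, .set m, h => absurd (h ▸ PHF.enc_atom_lt i) (Nat.not_lt.2 (PHF.le_enc_set m))
  | .set l, .atom j, h => absurd (h ▸ PHF.enc_atom_lt j) (Nat.not_lt.2 (PHF.le_enc_set l))
  | .set l, .set m, h => by
    rw [PHF.enc_set, PHF.enc_set] at h
    have hf : (l.map PHF.enc).toFinset = (m.map PHF.enc).toFinset :=
      finset_two_pow_inj (by omega)
    constructor
    · apply PHF.subOfForall
      intro b hb
      have : PHF.enc b ∈ (m.map PHF.enc).toFinset := by
        rw [← hf, List.mem_toFinset, List.mem_map]; exact ⟨b, hb, rfl⟩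
      rw [List.mem_toFinset, List.mem_map] at this
      obtain ⟨c, hc, henc⟩ := this
      exact ⟨c, hc, PHF.encInj b c henc.symm⟩
    · apply PHF.subOfForall
      intro b hb
      have : PHF.enc b ∈ (l.map PHF.enc).toFinset := by
        rw [hf, List.mem_toFinset, List.mem_map]; exact ⟨b, hb, rfl⟩
      rw [List.mem_toFinset, List.mem_map] at this
      obtain ⟨c, hc, henc⟩ := this
      exact ⟨c, hc, PHF.eqvSymm (PHF.encInj c b henc)⟩
termination_by x y _ => sizeOf x + sizeOf y
decreasing_by
  all_goals (have := List.sizeOf_lt_of_mem hb; have := List.sizeOf_lt_of_mem hc; simp_wf; omega)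

theorem exists_list_map_enc {u : ℕ} : ∀ (L : List ℕ),
    (∀ k ∈ L, ∃ x : PHF u, PHF.enc x = k) → ∃ xs : List (PHF u), xs.map PHF.enc = L
  | [], _ => ⟨[], rfl⟩
  | k :: L, h => by
    obtain ⟨x, hx⟩ := h k List.mem_cons_self
    obtain ⟨xs, hxs⟩ := exists_list_map_enc L (fun k hk => h k (List.mem_cons_of_mem _ hk))
    exact ⟨x :: xs, by simp [hx, hxs]⟩

theorem PHF.encSurj {u : ℕ} : ∀ n : ℕ, ∃ x : PHF u, PHF.enc x = n := by
  intro n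
  induction n using Nat.strong_induction_on with
  | _ n ih =>
    by_cases hn : n < u
    · exact ⟨.atom ⟨n, hn⟩, by rw [PHF.enc]⟩
    · push_neg at hn
      set m := n - u with hm
      obtain ⟨xs, hxs⟩ := exists_list_map_enc (u := u) m.bitIndices (by
        intro k hk
        apply ih
        have h1 : 2 ^ k ≤ m := Nat.two_pow_le_of_mem_bitIndices hk
        have h2 : k < 2 ^ k := Nat.lt_two_pow_self
        omega)
      refine ⟨.set xs, ?_⟩
      rw [PHF.enc_set, hxs,
        List.sum_toFinset _ (Nat.bitIndices_sorted.nodup)]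
      have := Nat.twoPowSum_bitIndices m
      omega

theorem HFU.mem_mk_set {u : ℕ} (y : HFU u) (l : List (PHF u)) :
    HFU.Mem y (Quotient.mk (PHF.setoid u) (PHF.set l)) ↔
      ∃ b ∈ l, Quotient.mk (PHF.setoid u) b = y := by
  constructor
  · rintro ⟨a', x', rfl, hx, hmem⟩
    have heq : PHF.Eqv x' (.set l) := Quotient.exact hx
    cases x' with
    | atom i => exact absurd hmem id
    | set m =>
      cases heq with
      | set h1 h2 =>
        obtain ⟨b, hb, hab⟩ := hmem
        obtain ⟨c, hc, hbc⟩ := PHF.memSub hb h1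
        exact ⟨c, hc, Quotient.sound (PHF.eqvSymm (PHF.eqvTrans hab hbc))⟩
  · rintro ⟨b, hb, rfl⟩
    exact ⟨b, .set l, rfl, rfl, ⟨b, hb, PHF.eqvRfl b⟩⟩

theorem f_eq_enc {u : ℕ} (f : HFU u → ℕ)
    (hatom : ∀ i : Fin u, f (HFU.atom i) = (i : ℕ))
    (hset : ∀ x : HFU u, x.IsSet → ∀ s : Finset (HFU u),
      (∀ y : HFU u, y ∈ s ↔ HFU.Mem y x) → f x = u + ∑ a ∈ s, 2 ^ f a) :
    ∀ x : PHF u, f (Quotient.mk (PHF.setoid u) x) = PHF.enc x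
  | .atom i => by rw [PHF.enc]; exact hatom i
  | .set l => by
    haveI : DecidableEq (HFU u) := Classical.decEq _
    set s : Finset (HFU u) := (l.map (fun b => @id (HFU u) (Quotient.mk (PHF.setoid u) b))).toFinset with hs
    have hmem : ∀ y : HFU u, y ∈ s ↔ HFU.Mem y (Quotient.mk (PHF.setoid u) (.set l)) := by
      intro y
      rw [hs, List.mem_toFinset, List.mem_map, HFU.mem_mk_set]; exact Iff.rfl
    rw [hset _ ⟨l, rfl⟩ s hmem, PHF.enc_set]
    congr 1
    have himg : (l.map PHF.enc).toFinset = s.image f := by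
      ext n
      simp only [List.mem_toFinset, List.mem_map, Finset.mem_image, hs]
      constructor
      · rintro ⟨b, hb, rfl⟩
        exact ⟨Quotient.mk _ b, ⟨b, hb, rfl⟩, f_eq_enc f hatom hset b⟩
      · rintro ⟨a, ⟨b, hb, rfl⟩, rfl⟩
        exact ⟨b, hb, (f_eq_enc f hatom hset b).symm⟩
    rw [himg, Finset.sum_image]
    intro a ha a' ha' hfa
    obtain ⟨b, hb, rfl⟩ := List.mem_map.1 (List.mem_toFinset.1 (Finset.mem_coe.1 ha))
    obtain ⟨b', hb', rfl⟩ := List.mem_map.1 (List.mem_toFinset.1 (Finset.mem_coe.1 ha'))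
    exact Quotient.sound (PHF.encInj b b'
      ((f_eq_enc f hatom hset b).symm.trans (hfa.trans (f_eq_enc f hatom hset b'))))
termination_by x => sizeOf x
decreasing_by
  all_goals (first
    | (have := List.sizeOf_lt_of_mem hb; simp_wf; omega)
    | (have := List.sizeOf_lt_of_mem hb'; simp_wf; omega))

/-- Ackermann's encoding with `u` urelements: any `f` with `f(i) = i` on urelements
and `f(x) = u + Σ_{a ∈ x} 2 ^ f(a)` on sets (the sum ranging over a `Finset`
enumerating exactly the members of `x`) is a bijection from the universe of
hereditarily finite sets with urelements `{0,...,u-1}` to `ℕ`. -/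
theorem ackermann_urelements_bijective (u : ℕ) (f : HFU u → ℕ)
    (hatom : ∀ i : Fin u, f (HFU.atom i) = (i : ℕ))
    (hset : ∀ x : HFU u, x.IsSet → ∀ s : Finset (HFU u),
      (∀ y : HFU u, y ∈ s ↔ HFU.Mem y x) → f x = u + ∑ a ∈ s, 2 ^ f a) :
    Function.Bijective f := by
  constructor
  · intro x y
    induction x using Quotient.ind with | _ a =>
    induction y using Quotient.ind with | _ b =>
    intro h
    rw [f_eq_enc f hatom hset a, f_eq_enc f hatom hset b] at h
    exact Quotient.sound (PHF.encInj a b h)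
  · intro n
    obtain ⟨x, hx⟩ := PHF.encSurj (u := u) n
    exact ⟨Quotient.mk _ x, (f_eq_enc f hatom hset x).trans hx⟩
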